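/- There exists a constant C > 0 depending only on d such that for every probability measure ℙ as in the setting, every f ∈ L²(ℙ) with f ≠ 0 and every t ≥ 1: 𝔼[(f°_t)²] ≤ C · (∫₁ᵗ 𝒩′(f°_s)^{−2/d} ds)^{−d/2}, where 𝒩′(g) := max(𝒩(g), 𝔼[f²]) (the second argument being the squared L² norm of the initial function f). -/

import Mathlib

open MeasureTheory ENNReal
open scoped ENNReal NNReal BigOperators

namespace RWRC

/-- sites of `ℤ^d` -/
abbrev V (d : ℕ) := Fin d → ℤ

/-- an (unoriented) nearest-neighbour edge of `ℤ^d`, encoded as `(x, i) = {x, x + eᵢ}` -/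
abbrev Edge (d : ℕ) := (Fin d → ℤ) × Fin d

/-- an environment: a conductance attached to every edge -/
abbrev Env (d : ℕ) := Edge d → ℝ

/-- translation of the environment by `x` : `(θ_x ω)_{y,z} = ω_{x+y,x+z}` -/
def theta {d : ℕ} (x : V d) (ω : Env d) : Env d := fun e => ω (x + e.1, e.2)

/-- the unit vector `±eᵢ` encoded by `p = (i, sign)` -/
def dir {d : ℕ} (p : Fin d × Bool) : V d :=
  if p.2 then Pi.single p.1 1 else -Pi.single p.1 1

/-- the edge `{0, dir p}` -/
def edgeOf {d : ℕ} (p : Fin d × Bool) : Edge d :=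
  (if p.2 then (0 : V d) else -Pi.single p.1 1, p.1)

/-- the box `B_n = {-n, …, n}^d` -/
noncomputable def box (d n : ℕ) : Finset (V d) := Fintype.piFinset fun _ => Finset.Icc (-(n : ℤ)) n

/-- `S_n(f)(ω) = ∑_{x ∈ B_n} f(θ_x ω)` -/
noncomputable def Sfun (d n : ℕ) (f : Env d → ℝ) (ω : Env d) : ℝ :=
  ∑ x ∈ box d n, f (theta x ω)

/-- Dirichlet form `ℰ(f,f) = (1/2) ∑_{|z|=1} 𝔼[ω_{0,z} (f(θ_z ω) - f(ω))²]` of the random walk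
among random conductances -/
noncomputable def dirichlet {d : ℕ} (P : Measure (Env d)) (f : Env d → ℝ) : ℝ :=
  (1 / 2) * ∑ p : Fin d × Bool,
    ∫ ω, ω (edgeOf p) * (f (theta (dir p) ω) - f ω) ^ 2 ∂P

/-- Dirichlet form `ℰ°(f,f) = (1/2) ∑_{|z|=1} 𝔼[(f(θ_z ω) - f(ω))²]` of the simple random walk -/
noncomputable def dirichlet0 {d : ℕ} (P : Measure (Env d)) (f : Env d → ℝ) : ℝ :=
  (1 / 2) * ∑ p : Fin d × Bool,
    ∫ ω, (f (theta (dir p) ω) - f ω) ^ 2 ∂P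

/-- `𝒩(g) = sup_n 𝔼[S_n(g)²]/|B_n|`, with values in `[0,∞]` -/
noncomputable def calN {d : ℕ} (P : Measure (Env d)) (g : Env d → ℝ) : ℝ≥0∞ :=
  ⨆ n : ℕ, (∫⁻ ω, ENNReal.ofReal (Sfun d n g ω ^ 2) ∂P) / ((box d n).card : ℝ≥0∞)

-- basic theta lemmas
lemma theta_zero {d : ℕ} : theta (0 : V d) = id := by
  funext ω e; simp [theta]

lemma theta_theta {d : ℕ} (a b : V d) (ω : Env d) :
    theta a (theta b ω) = theta (b + a) ω := by
  funext e; simp [theta, add_assoc]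

lemma card_box (d n : ℕ) : (box d n).card = (2 * n + 1) ^ d := by
  rw [box, Fintype.card_piFinset]
  simp only [Int.card_Icc]
  rw [Finset.prod_const, Finset.card_univ, Fintype.card_fin]
  congr 1
  omega

lemma box_zero (d : ℕ) : box d 0 = {0} := by
  ext x
  simp only [box, Fintype.mem_piFinset, Finset.mem_Icc, Finset.mem_singleton]
  constructor
  · intro h; funext i; have := h i; show x i = 0; omega
  · intro h i; subst h; simp

def ell1 {d : ℕ} (x : V d) : ℕ := ∑ i, (x i).natAbs

lemma ell1_le_of_mem_box {d n : ℕ} {x : V d} (hx : x ∈ box d n) : ell1 x ≤ d * n := by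
  simp only [box, Fintype.mem_piFinset, Finset.mem_Icc] at hx
  calc ell1 x ≤ ∑ _i : Fin d, n := by
        apply Finset.sum_le_sum
        intro i _
        have := hx i; omega
    _ = d * n := by simp [Finset.sum_const, mul_comm]

-- Lp sum coercion
lemma Lp_coeFn_sum {α : Type*} [MeasurableSpace α] {μ : Measure α} {ι : Type*}
    (s : Finset ι) (f : ι → Lp ℝ 2 μ) :
    ⇑(∑ i ∈ s, f i) =ᵐ[μ] fun ω => ∑ i ∈ s, f i ω := by
  classical
  refine Finset.induction_on s ?_ ?_
  · simp only [Finset.sum_empty]; exact Lp.coeFn_zero (E := ℝ) (p := 2) (μ := μ)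
  · intro a s' h ih
    rw [Finset.sum_insert h]
    filter_upwards [Lp.coeFn_add (f a) (∑ i ∈ s', f i), ih] with ω h1 h2
    rw [Finset.sum_insert h]
    simp only [Pi.add_apply] at h1
    rw [h1, h2]

set_option linter.unusedSectionVars false
variable {d : ℕ} {P : Measure (Env d)} [IsProbabilityMeasure P]

/-- the composition operator `g ↦ g ∘ θ_x` on `L²(P)` -/
noncomputable def U (hθ : ∀ x : V d, MeasurePreserving (theta x) P P) (x : V d) :
    Lp ℝ 2 P →+ Lp ℝ 2 P :=
  Lp.compMeasurePreserving (theta x) (hθ x)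

lemma U_coe (hθ : ∀ x : V d, MeasurePreserving (theta x) P P) (x : V d) (g : Lp ℝ 2 P) :
    ⇑(U hθ x g) =ᵐ[P] fun ω => g (theta x ω) :=
  Lp.coeFn_compMeasurePreserving g (hθ x)

lemma U_norm (hθ : ∀ x : V d, MeasurePreserving (theta x) P P) (x : V d) (g : Lp ℝ 2 P) :
    ‖U hθ x g‖ = ‖g‖ :=
  Lp.norm_compMeasurePreserving g (hθ x)

lemma U_zero (hθ : ∀ x : V d, MeasurePreserving (theta x) P P) (g : Lp ℝ 2 P) :
    U hθ 0 g = g := by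
  apply Lp.ext
  filter_upwards [U_coe hθ 0 g] with ω h
  rw [h]; rw [theta_zero]; rfl

lemma U_comp (hθ : ∀ x : V d, MeasurePreserving (theta x) P P) (x y : V d) (g : Lp ℝ 2 P) :
    U hθ x (U hθ y g) = U hθ (x + y) g := by
  apply Lp.ext
  have h1 : ⇑(U hθ y g) =ᵐ[P] fun ω => g (theta y ω) := U_coe hθ y g
  have h2 : (fun ω => (U hθ y g : Env d → ℝ) (theta x ω)) =ᵐ[P]
      (fun ω => g (theta y (theta x ω))) := by
    have := (hθ x).quasiMeasurePreserving.ae_eq_comp h1.symm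
    exact this.symm
  filter_upwards [U_coe hθ x (U hθ y g), h2, U_coe hθ (x + y) g] with ω ha hb hc
  rw [ha, hb, hc, theta_theta]

lemma U_dist (hθ : ∀ x : V d, MeasurePreserving (theta x) P P) (x y : V d) (g : Lp ℝ 2 P) :
    ‖U hθ x g - U hθ y g‖ = ‖U hθ (x - y) g - g‖ := by
  have h : U hθ y (U hθ (x - y) g - g) = U hθ x g - U hθ y g := by
    rw [map_sub, U_comp]; rw [add_sub_cancel]
  rw [← h, U_norm]

/-- the Dirichlet-type quadratic form `D(g) = ∑_p ‖g∘θ_{dir p} - g‖²` -/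
noncomputable def Dq (hθ : ∀ x : V d, MeasurePreserving (theta x) P P) (g : Lp ℝ 2 P) : ℝ :=
  ∑ p : Fin d × Bool, ‖U hθ (dir p) g - g‖ ^ 2

lemma Dq_nonneg (hθ : ∀ x : V d, MeasurePreserving (theta x) P P) (g : Lp ℝ 2 P) :
    0 ≤ Dq hθ g :=
  Finset.sum_nonneg fun _ _ => sq_nonneg _

lemma step_le_sqrt_Dq (hθ : ∀ x : V d, MeasurePreserving (theta x) P P) (g : Lp ℝ 2 P)
    (p : Fin d × Bool) : ‖U hθ (dir p) g - g‖ ≤ Real.sqrt (Dq hθ g) := by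
  have h1 : ‖U hθ (dir p) g - g‖ ^ 2 ≤ Dq hθ g :=
    Finset.single_le_sum (f := fun p => ‖U hθ (dir p) g - g‖ ^ 2)
      (fun _ _ => sq_nonneg _) (Finset.mem_univ p)
  calc ‖U hθ (dir p) g - g‖ = Real.sqrt (‖U hθ (dir p) g - g‖ ^ 2) :=
        (Real.sqrt_sq (norm_nonneg _)).symm
    _ ≤ Real.sqrt (Dq hθ g) := Real.sqrt_le_sqrt h1

lemma sub_one_step {d : ℕ} (x : V d) (i : Fin d) (hi : x i ≠ 0) :
    ∃ p : Fin d × Bool, ell1 (x - dir p) + 1 = ell1 x := by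
  refine ⟨(i, decide (0 < x i)), ?_⟩
  have key : ∀ j, (x - dir (i, decide (0 < x i))) j =
      if j = i then (if 0 < x i then x i - 1 else x i + 1) else x j := by
    intro j
    by_cases h : 0 < x i <;> by_cases hj : j = i <;>
      simp [dir, h, hj, Pi.single_apply, sub_eq_add_neg]
  unfold ell1
  rw [← Finset.sum_erase_add _ _ (Finset.mem_univ i),
      ← Finset.sum_erase_add _ _ (Finset.mem_univ i)]
  have h1 : ∀ j ∈ Finset.univ.erase i,
      ((x - dir (i, decide (0 < x i))) j).natAbs = (x j).natAbs := by
    intro j hj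
    rw [key j, if_neg (Finset.mem_erase.mp hj).1]
  rw [Finset.sum_congr rfl h1]
  have h2 : ((x - dir (i, decide (0 < x i))) i).natAbs + 1 = (x i).natAbs := by
    rw [key i, if_pos rfl]
    by_cases h : 0 < x i <;> simp [h] <;> omega
  omega

lemma telescope (hθ : ∀ x : V d, MeasurePreserving (theta x) P P) (g : Lp ℝ 2 P) :
    ∀ (k : ℕ) (x : V d), ell1 x ≤ k → ‖U hθ x g - g‖ ≤ k * Real.sqrt (Dq hθ g) := by
  intro k
  induction k with
  | zero =>
    intro x hx
    have hx0 : x = 0 := by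
      funext i
      have : (x i).natAbs = 0 := by
        have : ∑ j, (x j).natAbs = 0 := Nat.le_zero.mp hx
        have := (Finset.sum_eq_zero_iff.mp this) i (Finset.mem_univ i)
        exact this
      show x i = 0
      omega
    rw [hx0, U_zero, sub_self, norm_zero]
    simp
  | succ k ih =>
    intro x hx
    by_cases h0 : ell1 x ≤ k
    · calc ‖U hθ x g - g‖ ≤ k * Real.sqrt (Dq hθ g) := ih x h0
        _ ≤ (k + 1 : ℕ) * Real.sqrt (Dq hθ g) := by
            apply mul_le_mul_of_nonneg_right _ (Real.sqrt_nonneg _)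
            exact_mod_cast Nat.le_succ k
    · have hne : x ≠ 0 := by
        intro h; rw [h] at h0; apply h0
        have : ell1 (0 : V d) = 0 := by simp [ell1]
        omega
      have : ∃ i, x i ≠ 0 := by
        by_contra h
        push_neg at h
        exact hne (funext fun i => h i)
      obtain ⟨i, hi⟩ := this
      obtain ⟨p, hp⟩ := sub_one_step x i hi
      have hyk : ell1 (x - dir p) ≤ k := by omega
      calc ‖U hθ x g - g‖
          ≤ ‖U hθ x g - U hθ (x - dir p) g‖ + ‖U hθ (x - dir p) g - g‖ := by
            have := norm_sub_le_norm_sub_add_norm_sub (U hθ x g) (U hθ (x - dir p) g) g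
            exact this
        _ ≤ Real.sqrt (Dq hθ g) + k * Real.sqrt (Dq hθ g) := by
            apply add_le_add
            · rw [U_dist]
              have hxx : x - (x - dir p) = dir p := by abel
              rw [hxx]
              exact step_le_sqrt_Dq hθ g p
            · exact ih _ hyk
        _ = (k + 1 : ℕ) * Real.sqrt (Dq hθ g) := by push_cast; ring
lemma integrable_sq (h : Lp ℝ 2 P) :
    Integrable (fun ω => (h : Env d → ℝ) ω ^ 2) P := by
  have h1 := L2.integrable_inner (𝕜 := ℝ) h h
  refine h1.congr (ae_of_all _ fun ω => ?_)
  simp [RCLike.inner_apply, conj_trivial, sq]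

lemma integral_sq (h : Lp ℝ 2 P) :
    ∫ ω, (h : Env d → ℝ) ω ^ 2 ∂P = ‖h‖ ^ 2 := by
  have h1 : @inner ℝ _ _ h h = ∫ ω, @inner ℝ _ _ ((h : Env d → ℝ) ω) ((h : Env d → ℝ) ω) ∂P :=
    L2.inner_def h h
  rw [real_inner_self_eq_norm_sq] at h1
  rw [h1]
  refine integral_congr_ae (ae_of_all _ fun ω => ?_)
  simp [RCLike.inner_apply, conj_trivial, sq]

lemma lintegral_ofReal_sq (h : Lp ℝ 2 P) :
    ∫⁻ ω, ENNReal.ofReal ((h : Env d → ℝ) ω ^ 2) ∂P = ENNReal.ofReal (‖h‖ ^ 2) := by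
  rw [← ofReal_integral_eq_lintegral_ofReal (integrable_sq h)
      (ae_of_all _ fun ω => sq_nonneg _), integral_sq]
lemma sum_U_coe (hθ : ∀ x : V d, MeasurePreserving (theta x) P P) (g : Lp ℝ 2 P) (n : ℕ) :
    ⇑(∑ x ∈ box d n, U hθ x g) =ᵐ[P] Sfun d n ⇑g := by
  have h1 := Lp_coeFn_sum (box d n) (fun x => U hθ x g)
  have h2 : ∀ᵐ ω ∂P, ∀ x ∈ box d n, (U hθ x g) ω = (g : Env d → ℝ) (theta x ω) :=
    (ae_ball_iff (box d n).countable_toSet).2 fun x _ => U_coe hθ x g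
  filter_upwards [h1, h2] with ω ha hb
  rw [ha]
  exact Finset.sum_congr rfl fun x hx => hb x hx

lemma norm_sum_sq_le_of_calN (hθ : ∀ x : V d, MeasurePreserving (theta x) P P)
    (g : Lp ℝ 2 P) {Nr : ℝ} (hNr : 0 ≤ Nr) (hcal : calN P ⇑g ≤ ENNReal.ofReal Nr) (n : ℕ) :
    ‖∑ x ∈ box d n, U hθ x g‖ ^ 2 ≤ Nr * ((2 * n + 1 : ℝ)) ^ d := by
  set Sn := ∑ x ∈ box d n, U hθ x g with hSn
  have hterm : (∫⁻ ω, ENNReal.ofReal (Sfun d n (⇑g) ω ^ 2) ∂P) / ((box d n).card : ℝ≥0∞)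
      ≤ calN P ⇑g := le_iSup (fun n => (∫⁻ ω, ENNReal.ofReal (Sfun d n (⇑g) ω ^ 2) ∂P) /
        ((box d n).card : ℝ≥0∞)) n
  have hint : (∫⁻ ω, ENNReal.ofReal (Sfun d n (⇑g) ω ^ 2) ∂P) = ENNReal.ofReal (‖Sn‖ ^ 2) := by
    rw [← lintegral_ofReal_sq Sn]
    refine lintegral_congr_ae ?_
    filter_upwards [sum_U_coe hθ g n] with ω h
    rw [h]
  rw [hint] at hterm
  have hcard0 : ((box d n).card : ℝ≥0∞) ≠ 0 := by
    simp only [ne_eq, Nat.cast_eq_zero, card_box]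
    positivity
  have hcardt : ((box d n).card : ℝ≥0∞) ≠ ⊤ := ENNReal.natCast_ne_top _
  have h2 : ENNReal.ofReal (‖Sn‖ ^ 2) ≤ ENNReal.ofReal Nr * ((box d n).card : ℝ≥0∞) := by
    have := hterm.trans hcal
    rwa [ENNReal.div_le_iff_le_mul (Or.inl hcard0) (Or.inl hcardt)] at this
  have h3 : ENNReal.ofReal Nr * ((box d n).card : ℝ≥0∞)
      = ENNReal.ofReal (Nr * ((box d n).card : ℝ)) := by
    rw [ENNReal.ofReal_mul hNr, ENNReal.ofReal_natCast]
  rw [h3] at h2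
  have h4 := (ENNReal.ofReal_le_ofReal_iff (by positivity)).1 h2
  calc ‖Sn‖ ^ 2 ≤ Nr * ((box d n).card : ℝ) := h4
    _ = Nr * ((2 * n + 1 : ℝ)) ^ d := by rw [card_box]; push_cast; ring

lemma ofReal_normsq_le_calN (g : Lp ℝ 2 P) :
    ENNReal.ofReal (‖g‖ ^ 2) ≤ calN P ⇑g := by
  have h0 : Sfun d 0 (⇑g) = fun ω => (g : Env d → ℝ) ω := by
    funext ω
    rw [Sfun, box_zero, Finset.sum_singleton, theta_zero]
    rfl
  have hterm : (∫⁻ ω, ENNReal.ofReal (Sfun d 0 (⇑g) ω ^ 2) ∂P) / ((box d 0).card : ℝ≥0∞)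
      ≤ calN P ⇑g := le_iSup (fun n => (∫⁻ ω, ENNReal.ofReal (Sfun d n (⇑g) ω ^ 2) ∂P) /
        ((box d n).card : ℝ≥0∞)) 0
  rw [h0, box_zero, Finset.card_singleton, Nat.cast_one, div_one] at hterm
  exact le_trans (le_of_eq (lintegral_ofReal_sq g).symm) hterm

lemma norm_le_avg (hθ : ∀ x : V d, MeasurePreserving (theta x) P P) (g : Lp ℝ 2 P) (n : ℕ) :
    ‖g‖ ≤ ‖∑ x ∈ box d n, U hθ x g‖ / ((2 * n + 1 : ℝ)) ^ d
      + (d * n) * Real.sqrt (Dq hθ g) := by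
  set c : ℝ := ((2 * n + 1 : ℝ)) ^ d with hc
  have hcpos : 0 < c := by positivity
  have hcard : ((box d n).card : ℝ) = c := by rw [card_box]; push_cast; ring
  have key : c * ‖g‖ ≤ ‖∑ x ∈ box d n, U hθ x g‖ + c * ((d * n) * Real.sqrt (Dq hθ g)) := by
    have hsum : (∑ _x ∈ box d n, g) = (box d n).card • g := Finset.sum_const g
    have hsplit : (box d n).card • g = (∑ x ∈ box d n, U hθ x g)
        + ∑ x ∈ box d n, (g - U hθ x g) := by
      rw [← hsum, ← Finset.sum_add_distrib]
      exact Finset.sum_congr rfl fun x _ => by abel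
    have h1 : ‖(box d n).card • g‖ = c * ‖g‖ := by
      rw [← Nat.cast_smul_eq_nsmul ℝ, norm_smul, Real.norm_natCast, hcard]
    have h2 : ‖∑ x ∈ box d n, (g - U hθ x g)‖ ≤ c * ((d * n) * Real.sqrt (Dq hθ g)) := by
      calc ‖∑ x ∈ box d n, (g - U hθ x g)‖ ≤ ∑ x ∈ box d n, ‖g - U hθ x g‖ :=
            norm_sum_le _ _
        _ ≤ ∑ _x ∈ box d n, (d * n) * Real.sqrt (Dq hθ g) := by
            refine Finset.sum_le_sum fun x hx => ?_
            rw [norm_sub_rev]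
            have := telescope hθ g (d * n) x (ell1_le_of_mem_box hx)
            calc ‖U hθ x g - g‖ ≤ (d * n : ℕ) * Real.sqrt (Dq hθ g) := this
              _ = (d * n : ℝ) * Real.sqrt (Dq hθ g) := by push_cast; ring
        _ = c * ((d * n) * Real.sqrt (Dq hθ g)) := by
            rw [Finset.sum_const, nsmul_eq_mul, hcard]
    calc c * ‖g‖ = ‖(box d n).card • g‖ := h1.symm
      _ ≤ ‖∑ x ∈ box d n, U hθ x g‖ + ‖∑ x ∈ box d n, (g - U hθ x g)‖ := by
          rw [hsplit]; exact norm_add_le _ _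
      _ ≤ ‖∑ x ∈ box d n, U hθ x g‖ + c * ((d * n) * Real.sqrt (Dq hθ g)) := by
          exact add_le_add (le_refl _) h2
  have heq : ‖∑ x ∈ box d n, U hθ x g‖ / c + (d * n) * Real.sqrt (Dq hθ g)
      = (‖∑ x ∈ box d n, U hθ x g‖ + c * ((d * n) * Real.sqrt (Dq hθ g))) / c := by
    field_simp
  rw [heq, le_div_iff₀ hcpos]
  calc ‖g‖ * c = c * ‖g‖ := mul_comm _ _
    _ ≤ _ := key
lemma inner_Lop (hθ : ∀ x : V d, MeasurePreserving (theta x) P P)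
    (Lop : Lp ℝ 2 P →L[ℝ] Lp ℝ 2 P)
    (hLop : ∀ g : Lp ℝ 2 P, (Lop g : Env d → ℝ) =ᵐ[P]
      fun ω => ∑ p : Fin d × Bool,
        ((g : Env d → ℝ) (theta (dir p) ω) - (g : Env d → ℝ) ω))
    (g : Lp ℝ 2 P) :
    @inner ℝ _ _ (Lop g) g = -(1 / 2) * Dq hθ g := by
  have hLg : Lop g = ∑ p : Fin d × Bool, (U hθ (dir p) g - g) := by
    apply Lp.ext
    have h1 := Lp_coeFn_sum (Finset.univ : Finset (Fin d × Bool))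
      (fun p => U hθ (dir p) g - g)
    have h2 : ∀ᵐ ω ∂P, ∀ p ∈ (Finset.univ : Finset (Fin d × Bool)),
        (U hθ (dir p) g - g) ω = (g : Env d → ℝ) (theta (dir p) ω) - (g : Env d → ℝ) ω := by
      refine (ae_ball_iff (Finset.univ : Finset (Fin d × Bool)).countable_toSet).2
        fun p _ => ?_
      filter_upwards [Lp.coeFn_sub (U hθ (dir p) g) g, U_coe hθ (dir p) g] with ω ha hb
      rw [ha]
      simp [hb]
    filter_upwards [hLop g, h1, h2] with ω ha hb hc
    rw [ha, hb]
    exact (Finset.sum_congr rfl fun p hp => hc p hp).symm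
  rw [hLg, sum_inner]
  have hper : ∀ p : Fin d × Bool,
      @inner ℝ _ _ (U hθ (dir p) g - g) g = -(1 / 2) * ‖U hθ (dir p) g - g‖ ^ 2 := by
    intro p
    have hn : ‖U hθ (dir p) g‖ = ‖g‖ := U_norm hθ (dir p) g
    have expand : ‖U hθ (dir p) g - g‖ ^ 2
        = ‖U hθ (dir p) g‖ ^ 2 - 2 * @inner ℝ _ _ (U hθ (dir p) g) g + ‖g‖ ^ 2 :=
      norm_sub_sq_real (U hθ (dir p) g) g
    have hsub : @inner ℝ _ _ (U hθ (dir p) g - g) g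
        = @inner ℝ _ _ (U hθ (dir p) g) g - @inner ℝ _ _ g g := inner_sub_left _ _ _
    have hself : @inner ℝ _ _ g g = ‖g‖ ^ 2 := real_inner_self_eq_norm_sq g
    rw [hn] at expand
    rw [hsub, hself]
    linarith
  rw [Finset.sum_congr rfl fun p _ => hper p, Dq, ← Finset.mul_sum]
lemma nash_arith (d : ℕ) (hd : 1 ≤ d) (x D Nr : ℝ) (hx : 0 < x) (hD : 0 ≤ D) (hxN : x ≤ Nr)
    (H : ∀ n : ℕ, Real.sqrt x ≤ Real.sqrt (Nr / ((2 * n + 1 : ℝ)) ^ d)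
      + (d * n) * Real.sqrt D) :
    x ^ ((2 : ℝ) / d + 1) * Nr ^ (-(2 : ℝ) / d) ≤ 256 * (d : ℝ) ^ 2 * D := by
  have hdR : (0 : ℝ) < d := by exact_mod_cast hd
  have hNr : 0 < Nr := lt_of_lt_of_le hx hxN
  set r : ℝ := Nr / x with hr
  have hr1 : 1 ≤ r := (one_le_div hx).2 hxN
  have hrpos : 0 < r := lt_of_lt_of_le one_pos hr1
  set a : ℝ := (4 * r) ^ ((d : ℝ)⁻¹) with ha
  have h4r : (1 : ℝ) ≤ 4 * r := by linarith
  have hapos : 0 < a := Real.rpow_pos_of_pos (by linarith) _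
  have ha1 : 1 ≤ a := Real.one_le_rpow h4r (by positivity)
  set n : ℕ := ⌈a⌉₊ with hn
  have hna : a ≤ n := Nat.le_ceil a
  have hn2a : (n : ℝ) ≤ 2 * a := by
    have := Nat.ceil_lt_add_one (le_of_lt hapos)
    have : (n : ℝ) < a + 1 := this
    linarith
  have had : a ^ d = 4 * r := Real.rpow_inv_natCast_pow (by linarith) (by omega)
  have hpow : 4 * r ≤ ((2 * n + 1 : ℝ)) ^ d := by
    rw [← had]
    apply pow_le_pow_left₀ (le_of_lt hapos)
    linarith
  have hterm1 : Real.sqrt (Nr / ((2 * n + 1 : ℝ)) ^ d) ≤ Real.sqrt x / 2 := by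
    have h1 : Nr / ((2 * n + 1 : ℝ)) ^ d ≤ Nr / (4 * r) := by
      apply div_le_div_of_nonneg_left (le_of_lt hNr) (by linarith) hpow
    have h2 : Nr / (4 * r) = x / 4 := by
      rw [hr]; field_simp
    have h3 : Real.sqrt (x / 4) = Real.sqrt x / 2 := by
      rw [Real.sqrt_div (le_of_lt hx) 4]
      congr 1
      rw [show (4 : ℝ) = 2 ^ 2 by norm_num, Real.sqrt_sq (by norm_num : (0:ℝ) ≤ 2)]
    calc Real.sqrt (Nr / ((2 * n + 1 : ℝ)) ^ d) ≤ Real.sqrt (x / 4) := by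
          rw [← h2]; exact Real.sqrt_le_sqrt h1
      _ = Real.sqrt x / 2 := h3
  have hkey : Real.sqrt x ≤ 2 * ((d * n) * Real.sqrt D) := by
    have := H n
    have h := hterm1
    linarith
  have hsq : x ≤ 4 * ((d : ℝ) * n) ^ 2 * D := by
    have h1 : Real.sqrt x ^ 2 ≤ (2 * ((d * n) * Real.sqrt D)) ^ 2 := by
      apply pow_le_pow_left₀ (Real.sqrt_nonneg _) hkey
    rw [Real.sq_sqrt (le_of_lt hx)] at h1
    calc x ≤ (2 * ((d * n) * Real.sqrt D)) ^ 2 := h1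
      _ = 4 * ((d : ℝ) * n) ^ 2 * Real.sqrt D ^ 2 := by ring
      _ = 4 * ((d : ℝ) * n) ^ 2 * D := by rw [Real.sq_sqrt hD]
  have hn2 : ((n : ℝ)) ^ 2 ≤ 4 * a ^ 2 := by nlinarith [hna, hn2a, hapos.le]
  have hxD : x ≤ 16 * (d : ℝ) ^ 2 * a ^ 2 * D := by
    calc x ≤ 4 * ((d : ℝ) * n) ^ 2 * D := hsq
      _ = 4 * (d : ℝ) ^ 2 * (n : ℝ) ^ 2 * D := by ring
      _ ≤ 4 * (d : ℝ) ^ 2 * (4 * a ^ 2) * D := by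
          apply mul_le_mul_of_nonneg_right _ hD
          apply mul_le_mul_of_nonneg_left hn2 (by positivity)
      _ = 16 * (d : ℝ) ^ 2 * a ^ 2 * D := by ring
  -- key : a ^ 2 * (x ^ (2/d) * Nr ^ (-2/d)) = 4 ^ ((2:ℝ)/d) ≤ 16
  have hmain : a ^ 2 * (x ^ ((2 : ℝ) / d) * Nr ^ (-(2 : ℝ) / d)) ≤ 16 := by
    have e1 : a ^ 2 = (4 * r) ^ ((2 : ℝ) / d) := by
      rw [ha, ← Real.rpow_natCast ((4 * r) ^ ((d : ℝ)⁻¹)) 2, ← Real.rpow_mul (by linarith)]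
      norm_num
      rw [div_eq_inv_mul]
    have e2 : x ^ ((2 : ℝ) / d) * Nr ^ (-(2 : ℝ) / d) = (x / Nr) ^ ((2 : ℝ) / d) := by
      rw [Real.div_rpow (le_of_lt hx) (le_of_lt hNr)]
      rw [neg_div, Real.rpow_neg (le_of_lt hNr)]
      exact (div_eq_mul_inv _ _).symm
    rw [e1, e2, ← Real.mul_rpow (by linarith) (by positivity)]
    have e3 : 4 * r * (x / Nr) = 4 := by
      rw [hr]; field_simp
    rw [e3]
    calc (4 : ℝ) ^ ((2 : ℝ) / d) ≤ (4 : ℝ) ^ (2 : ℝ) := by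
          apply Real.rpow_le_rpow_of_exponent_le (by norm_num)
          rw [div_le_iff₀ hdR]
          have h1d : (1 : ℝ) ≤ d := by exact_mod_cast hd
          linarith
      _ = 16 := by
          rw [show (2 : ℝ) = ((2 : ℕ) : ℝ) by norm_num, Real.rpow_natCast]
          norm_num
  -- conclude
  have hxpow : x ^ ((2 : ℝ) / d + 1) = x ^ ((2 : ℝ) / d) * x := by
    rw [Real.rpow_add hx, Real.rpow_one]
  have hfac : (0 : ℝ) ≤ x ^ ((2 : ℝ) / d) * Nr ^ (-(2 : ℝ) / d) := by positivity
  calc x ^ ((2 : ℝ) / d + 1) * Nr ^ (-(2 : ℝ) / d)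
      = (x ^ ((2 : ℝ) / d) * Nr ^ (-(2 : ℝ) / d)) * x := by rw [hxpow]; ring
    _ ≤ (x ^ ((2 : ℝ) / d) * Nr ^ (-(2 : ℝ) / d)) * (16 * (d : ℝ) ^ 2 * a ^ 2 * D) :=
        mul_le_mul_of_nonneg_left hxD hfac
    _ = 16 * (d : ℝ) ^ 2 * D * (a ^ 2 * (x ^ ((2 : ℝ) / d) * Nr ^ (-(2 : ℝ) / d))) := by ring
    _ ≤ 16 * (d : ℝ) ^ 2 * D * 16 := by
        apply mul_le_mul_of_nonneg_left hmain (by positivity)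
    _ = 256 * (d : ℝ) ^ 2 * D := by ring

set_option maxHeartbeats 1000000 in
set_option synthInstance.maxHeartbeats 400000 in
/-- For every `d ≥ 1` there is `C > 0` (depending only on `d`) such that for every law `ℙ`
as in the setting, denoting by `L°` the generator of the environment viewed by the simple
random walk and `f°_s = exp(sL°) f`, one has for every `0 ≠ f ∈ L²(ℙ)` and `t ≥ 1`:
`𝔼[(f°_t)²] ≤ C (∫₁ᵗ 𝒩′(f°_s)^{-2/d} ds)^{-d/2}`, where `𝒩′(g) = max (𝒩(g)) (𝔼[f²])`. -/
theorem variance_decay_general_simple_rw :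
    ∀ d : ℕ, 1 ≤ d → ∃ C : ℝ, 0 < C ∧
      ∀ (P : Measure (Env d)), IsProbabilityMeasure P →
        (∀ x : V d, MeasurePreserving (theta x) P P) →
        (∀ᵐ ω ∂P, ∀ e : Edge d, 1 ≤ ω e) →
        ∀ Lop : Lp ℝ 2 P →L[ℝ] Lp ℝ 2 P,
          (∀ g : Lp ℝ 2 P,
            (Lop g : Env d → ℝ) =ᵐ[P]
              fun ω => ∑ p : Fin d × Bool,
                ((g : Env d → ℝ) (theta (dir p) ω) - (g : Env d → ℝ) ω)) →
          ∀ F : Lp ℝ 2 P, F ≠ 0 → ∀ t : ℝ, 1 ≤ t →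
            ENNReal.ofReal (‖NormedSpace.exp (t • Lop) F‖ ^ 2) ≤
              ENNReal.ofReal C *
                (∫⁻ s in Set.Ioc (1 : ℝ) t,
                    (max (calN P (NormedSpace.exp (s • Lop) F : Lp ℝ 2 P))
                        (ENNReal.ofReal (‖F‖ ^ 2)) ^ ((2 : ℝ) / d))⁻¹) ^ (-(d : ℝ) / 2) := by
  intro d hd
  have hdR : (1 : ℝ) ≤ (d : ℝ) := by exact_mod_cast hd
  have hdpos : (0 : ℝ) < d := by linarith
  set C : ℝ := (128 * (d : ℝ) ^ 3) ^ ((d : ℝ) / 2) with hC_def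
  have hC : 0 < C := Real.rpow_pos_of_pos (by positivity) _
  refine ⟨C, hC, ?_⟩
  intro P hP hθ _hω Lop hLop F hF t ht
  set c' : ℝ := (128 * (d : ℝ) ^ 3)⁻¹ with hc'_def
  have hc' : 0 < c' := by positivity
  set u : ℝ → Lp ℝ 2 P := fun s => NormedSpace.exp (s • Lop) F with hu_def
  -- derivative of u
  have hu : ∀ s : ℝ, HasDerivAt u (Lop (u s)) s := by
    intro s
    have h1 := hasDerivAt_exp_smul_const (𝕂 := ℝ) Lop s
    have h2 := h1.clm_apply (hasDerivAt_const s F)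
    have hc1 : Commute (s • Lop) Lop := by
      rw [Commute, SemiconjBy, smul_mul_assoc, mul_smul_comm]
    have hcomm : NormedSpace.exp (s • Lop) * Lop = Lop * NormedSpace.exp (s • Lop) :=
      hc1.exp_left.eq
    have h3 : (NormedSpace.exp (s • Lop) * Lop) F + (NormedSpace.exp (s • Lop)) 0
        = Lop (u s) := by
      rw [map_zero, add_zero, hcomm, ContinuousLinearMap.mul_apply]
    rw [h3] at h2
    exact h2
  -- u s never vanishes
  have hu0 : ∀ s : ℝ, u s ≠ 0 := by
    intro s hs0
    apply hF
    have hinv : NormedSpace.exp (-(s • Lop)) * NormedSpace.exp (s • Lop) = 1 := by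
      rw [← NormedSpace.exp_add_of_commute_of_mem_ball (𝕂 := ℝ) ((Commute.refl (s • Lop)).neg_left)
        ((NormedSpace.expSeries_radius_eq_top ℝ (Lp ℝ 2 P →L[ℝ] Lp ℝ 2 P)).symm ▸ edist_lt_top _ _)
        ((NormedSpace.expSeries_radius_eq_top ℝ (Lp ℝ 2 P →L[ℝ] Lp ℝ 2 P)).symm ▸ edist_lt_top _ _)]
      rw [neg_add_cancel, NormedSpace.exp_zero]
    have h4 : F = NormedSpace.exp (-(s • Lop)) (u s) := by
      rw [hu_def]
      simp only []
      rw [← ContinuousLinearMap.mul_apply, hinv, ContinuousLinearMap.one_apply]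
    rw [h4, hs0, map_zero]
  set φ : ℝ → ℝ := fun s => ‖u s‖ ^ 2 with hφ_def
  have hφpos : ∀ s, 0 < φ s := fun s => by
    have := norm_pos_iff.mpr (hu0 s)
    positivity
  have hφ : ∀ s, HasDerivAt φ (-(Dq hθ (u s))) s := by
    intro s
    have h1 := HasDerivAt.inner ℝ (hu s) (hu s)
    have heq : (fun s => @inner ℝ _ _ (u s) (u s)) = φ :=
      funext fun s => real_inner_self_eq_norm_sq (u s)
    rw [heq] at h1
    have hval : @inner ℝ _ _ (u s) (Lop (u s)) + @inner ℝ _ _ (Lop (u s)) (u s)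
        = -(Dq hθ (u s)) := by
      have hflip : @inner ℝ _ _ (u s) (Lop (u s)) = @inner ℝ _ _ (Lop (u s)) (u s) :=
        real_inner_comm _ _
      rw [hflip, inner_Lop hθ Lop hLop (u s)]
      ring
    rw [hval] at h1
    exact h1
  -- continuity
  have hucont : Continuous u := continuous_iff_continuousAt.2 fun s => (hu s).continuousAt
  have hDcont : Continuous (fun s => Dq hθ (u s)) := by
    apply continuous_finset_sum
    intro p _
    apply Continuous.pow
    apply Continuous.norm
    exact ((Lp.isometry_compMeasurePreserving (hθ (dir p))).continuous.comp hucont).sub hucont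
  have hφcont : Continuous φ := (hucont.norm).pow 2
  set ψ : ℝ → ℝ := fun s => φ s ^ (-((2 : ℝ) / d)) with hψ_def
  set ψ' : ℝ → ℝ := fun s => (2 / d) * φ s ^ (-((2 : ℝ) / d) - 1) * Dq hθ (u s) with hψ'_def
  have hψ : ∀ s, HasDerivAt ψ (ψ' s) s := by
    intro s
    have h1 := (hφ s).rpow_const (p := -((2 : ℝ) / d)) (Or.inl (ne_of_gt (hφpos s)))
    convert h1 using 1
    simp only [hψ'_def]
    ring
  have hψ'cont : Continuous ψ' := by
    apply Continuous.mul
    · exact continuous_const.mul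
        (hφcont.rpow_const fun s => Or.inl (ne_of_gt (hφpos s)))
    · exact hDcont
  have hψ'nonneg : ∀ s, 0 ≤ ψ' s := by
    intro s
    apply mul_nonneg (mul_nonneg (by positivity) (Real.rpow_nonneg (hφpos s).le _))
      (Dq_nonneg hθ (u s))
  have hψnonneg : ∀ s, 0 ≤ ψ s := fun s => Real.rpow_nonneg (hφpos s).le _
  -- pointwise bound on the integrand
  have hG : ∀ s : ℝ,
      (max (calN P ⇑(u s)) (ENNReal.ofReal (‖F‖ ^ 2)) ^ ((2 : ℝ) / d))⁻¹
        ≤ ENNReal.ofReal (c'⁻¹ * ψ' s) := by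
    intro s
    by_cases hfin : calN P ⇑(u s) = ⊤
    · rw [hfin, max_eq_left le_top, ENNReal.top_rpow_of_pos (by positivity), ENNReal.inv_top]
      exact zero_le
    · set Nr : ℝ := max (calN P ⇑(u s)).toReal (‖F‖ ^ 2) with hNr_def
      have hF2 : (0 : ℝ) < ‖F‖ ^ 2 := by
        have := norm_pos_iff.mpr hF
        positivity
      have hNr0 : 0 < Nr := lt_of_lt_of_le hF2 (le_max_right _ _)
      have hφN : φ s ≤ Nr := by
        have h1 : ENNReal.ofReal (φ s) ≤ calN P ⇑(u s) := ofReal_normsq_le_calN (u s)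
        have h2 := ENNReal.toReal_mono hfin h1
        rw [ENNReal.toReal_ofReal (hφpos s).le] at h2
        exact h2.trans (le_max_left _ _)
      have hcal : calN P ⇑(u s) ≤ ENNReal.ofReal Nr := by
        rw [← ENNReal.ofReal_toReal hfin]
        exact ENNReal.ofReal_le_ofReal (le_max_left _ _)
      have hmono : Monotone ENNReal.ofReal := fun _ _ h => ENNReal.ofReal_le_ofReal h
      have hmax : max (calN P ⇑(u s)) (ENNReal.ofReal (‖F‖ ^ 2)) = ENNReal.ofReal Nr := by
        rw [← ENNReal.ofReal_toReal hfin, hNr_def, hmono.map_max]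
      -- Nash premise
      have H : ∀ n : ℕ, Real.sqrt (φ s) ≤ Real.sqrt (Nr / ((2 * n + 1 : ℝ)) ^ d)
          + (d * n) * Real.sqrt (Dq hθ (u s)) := by
        intro n
        set cn : ℝ := ((2 * n + 1 : ℝ)) ^ d with hcn_def
        have hcnpos : 0 < cn := by positivity
        have h1 := norm_le_avg hθ (u s) n
        have h2 := norm_sum_sq_le_of_calN hθ (u s) hNr0.le hcal n
        have h3 : ‖∑ x ∈ box d n, U hθ x (u s)‖ ≤ Real.sqrt (Nr * cn) := by
          rw [← Real.sqrt_sq (norm_nonneg (∑ x ∈ box d n, U hθ x (u s)))]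
          exact Real.sqrt_le_sqrt h2
        have h4 : Real.sqrt (Nr / cn) = Real.sqrt (Nr * cn) / cn := by
          rw [show Nr / cn = Nr * cn / cn ^ 2 by field_simp,
            Real.sqrt_div (by positivity) _, Real.sqrt_sq hcnpos.le]
        have h5 : Real.sqrt (φ s) = ‖u s‖ := Real.sqrt_sq (norm_nonneg (u s))
        rw [h5, h4]
        calc ‖u s‖ ≤ ‖∑ x ∈ box d n, U hθ x (u s)‖ / cn
            + (d * n) * Real.sqrt (Dq hθ (u s)) := h1
          _ ≤ Real.sqrt (Nr * cn) / cn + (d * n) * Real.sqrt (Dq hθ (u s)) := by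
              apply add_le_add ?_ le_rfl
              exact div_le_div_of_nonneg_right h3 hcnpos.le
      have hnash := nash_arith d hd (φ s) (Dq hθ (u s)) Nr (hφpos s)
        (Dq_nonneg hθ (u s)) hφN H
      -- derive the key lower bound on ψ' s
      have hDlow : φ s ^ ((2 : ℝ) / d + 1) * Nr ^ (-(2 : ℝ) / d) / (256 * (d : ℝ) ^ 2)
          ≤ Dq hθ (u s) := by
        rw [div_le_iff₀ (by positivity)]
        calc φ s ^ ((2 : ℝ) / d + 1) * Nr ^ (-(2 : ℝ) / d)
            ≤ 256 * (d : ℝ) ^ 2 * Dq hθ (u s) := hnash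
          _ = Dq hθ (u s) * (256 * (d : ℝ) ^ 2) := by ring
      have hkey : c' * Nr ^ (-(2 : ℝ) / d) ≤ ψ' s := by
        have hmul : φ s ^ (-((2 : ℝ) / d) - 1) * φ s ^ ((2 : ℝ) / d + 1) = 1 := by
          rw [← Real.rpow_add (hφpos s)]
          norm_num
        have heq1 : (2 / (d : ℝ)) * φ s ^ (-((2 : ℝ) / d) - 1)
            * (φ s ^ ((2 : ℝ) / d + 1) * Nr ^ (-(2 : ℝ) / d) / (256 * (d : ℝ) ^ 2))
            = (2 / (d : ℝ)) / (256 * (d : ℝ) ^ 2)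
              * (φ s ^ (-((2 : ℝ) / d) - 1) * φ s ^ ((2 : ℝ) / d + 1))
              * Nr ^ (-(2 : ℝ) / d) := by ring
        have heq2 : (2 / (d : ℝ)) / (256 * (d : ℝ) ^ 2) = c' := by
          rw [hc'_def]
          field_simp
          ring
        calc c' * Nr ^ (-(2 : ℝ) / d)
            = (2 / (d : ℝ)) * φ s ^ (-((2 : ℝ) / d) - 1)
              * (φ s ^ ((2 : ℝ) / d + 1) * Nr ^ (-(2 : ℝ) / d) / (256 * (d : ℝ) ^ 2)) := by
              rw [heq1, hmul, mul_one, heq2]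
          _ ≤ (2 / (d : ℝ)) * φ s ^ (-((2 : ℝ) / d) - 1) * Dq hθ (u s) := by
              apply mul_le_mul_of_nonneg_left hDlow
              positivity
          _ = ψ' s := rfl
      rw [hmax]
      rw [ENNReal.ofReal_rpow_of_pos hNr0,
        ← ENNReal.ofReal_inv_of_pos (Real.rpow_pos_of_pos hNr0 _)]
      apply ENNReal.ofReal_le_ofReal
      have h6 : (Nr ^ ((2 : ℝ) / d))⁻¹ = Nr ^ (-(2 : ℝ) / d) := by
        rw [neg_div, Real.rpow_neg hNr0.le]
      rw [h6]
      have h7 : Nr ^ (-(2 : ℝ) / d) = c'⁻¹ * (c' * Nr ^ (-(2 : ℝ) / d)) := by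
        rw [← mul_assoc, inv_mul_cancel₀ (ne_of_gt hc'), one_mul]
      rw [h7]
      exact mul_le_mul_of_nonneg_left hkey (by positivity)
  -- integrate
  have hI : (∫⁻ s in Set.Ioc (1 : ℝ) t,
      (max (calN P ⇑(u s)) (ENNReal.ofReal (‖F‖ ^ 2)) ^ ((2 : ℝ) / d))⁻¹)
        ≤ ENNReal.ofReal (c'⁻¹ * ψ t) := by
    have hint : Integrable (fun s => c'⁻¹ * ψ' s) (volume.restrict (Set.Ioc (1 : ℝ) t)) :=
      ((continuous_const.mul hψ'cont).intervalIntegrable 1 t).1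
    calc (∫⁻ s in Set.Ioc (1 : ℝ) t,
        (max (calN P ⇑(u s)) (ENNReal.ofReal (‖F‖ ^ 2)) ^ ((2 : ℝ) / d))⁻¹)
        ≤ ∫⁻ s in Set.Ioc (1 : ℝ) t, ENNReal.ofReal (c'⁻¹ * ψ' s) :=
          lintegral_mono fun s => hG s
      _ = ENNReal.ofReal (∫ s in Set.Ioc (1 : ℝ) t, c'⁻¹ * ψ' s) :=
          (ofReal_integral_eq_lintegral_ofReal hint
            (ae_of_all _ fun s => mul_nonneg (by positivity) (hψ'nonneg s))).symm
      _ ≤ ENNReal.ofReal (c'⁻¹ * ψ t) := by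
          apply ENNReal.ofReal_le_ofReal
          have hftc : ∫ s in Set.Ioc (1 : ℝ) t, ψ' s = ψ t - ψ 1 := by
            rw [← intervalIntegral.integral_of_le ht]
            exact intervalIntegral.integral_eq_sub_of_hasDerivAt
              (fun s _ => hψ s) (hψ'cont.intervalIntegrable 1 t)
          rw [MeasureTheory.integral_const_mul, hftc]
          have := hψnonneg 1
          have h7 : ψ t - ψ 1 ≤ ψ t := by linarith
          exact mul_le_mul_of_nonneg_left h7 (by positivity)
  -- final assembly
  have hpsit : 0 < c'⁻¹ * ψ t := by
    have : 0 < ψ t := Real.rpow_pos_of_pos (hφpos t) _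
    positivity
  have hmono2 : (ENNReal.ofReal (c'⁻¹ * ψ t)) ^ (-(d : ℝ) / 2)
      ≤ (∫⁻ s in Set.Ioc (1 : ℝ) t,
          (max (calN P ⇑(u s)) (ENNReal.ofReal (‖F‖ ^ 2)) ^ ((2 : ℝ) / d))⁻¹) ^ (-(d : ℝ) / 2) := by
    rw [show (-(d : ℝ) / 2) = -((d : ℝ) / 2) by ring, ENNReal.rpow_neg, ENNReal.rpow_neg]
    exact ENNReal.inv_le_inv.2 (ENNReal.rpow_le_rpow hI (by positivity))
  have hrealeq : C * ((c'⁻¹ * ψ t) ^ (-(d : ℝ) / 2)) = φ t := by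
    have hc'inv : c'⁻¹ = 128 * (d : ℝ) ^ 3 := by rw [hc'_def, inv_inv]
    have e2 : (c'⁻¹ : ℝ) ^ (-(d : ℝ) / 2) = C⁻¹ := by
      rw [hc'inv, neg_div, Real.rpow_neg (by positivity), hC_def]
    have e3 : (ψ t) ^ (-(d : ℝ) / 2) = φ t := by
      show ((φ t) ^ (-((2 : ℝ) / d))) ^ (-(d : ℝ) / 2) = φ t
      rw [← Real.rpow_mul (hφpos t).le]
      rw [show (-((2 : ℝ) / d)) * (-(d : ℝ) / 2) = 1 by field_simp]
      exact Real.rpow_one _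
    rw [Real.mul_rpow (by positivity) (hψnonneg t), e2, e3, ← mul_assoc,
      mul_inv_cancel₀ (ne_of_gt hC), one_mul]
  calc ENNReal.ofReal (‖NormedSpace.exp (t • Lop) F‖ ^ 2)
      = ENNReal.ofReal (φ t) := rfl
    _ = ENNReal.ofReal C * ENNReal.ofReal ((c'⁻¹ * ψ t) ^ (-(d : ℝ) / 2)) := by
        rw [← ENNReal.ofReal_mul hC.le, hrealeq]
    _ = ENNReal.ofReal C * (ENNReal.ofReal (c'⁻¹ * ψ t)) ^ (-(d : ℝ) / 2) := by
        rw [ENNReal.ofReal_rpow_of_pos hpsit]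
    _ ≤ ENNReal.ofReal C * (∫⁻ s in Set.Ioc (1 : ℝ) t,
          (max (calN P ⇑(u s)) (ENNReal.ofReal (‖F‖ ^ 2)) ^ ((2 : ℝ) / d))⁻¹) ^ (-(d : ℝ) / 2) :=
        mul_le_mul_right hmono2 _

end RWRC
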